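/- Let 0 < p < 1, let I be a countable index set, and let x = (x_i)_{i∈I} ∈ ℓ^p(I). For n ≥ 1 let |x|_{(n)} denote the n-th largest value among (|x_i|)_{i∈I} (the n-th term of the decreasing rearrangement). Then there is a constant c_p depending only on p such that ∑_{i : |x_i| ≤ |x|_{(n)}} |x_i| ≤ c_p · ‖x‖_p · n^{−(1−p)/p} for every n ≥ 1. -/

import Mathlib

noncomputable section

/-- The `n`-th largest value among `(|x_i|)_{i ∈ I}` (the `n`-th term of the
decreasing rearrangement, counted with multiplicity):
the supremum of all `t > 0` such that at least `n` indices satisfy `t ≤ |x_i|`. -/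
def nthLargest {I : Type*} (x : I → ℂ) (n : ℕ) : ℝ :=
  sSup {t : ℝ | 0 < t ∧ n ≤ Nat.card {i : I // t ≤ ‖x i‖}}

/-- Lemma 7.4: the tail of an `ℓ^p` sequence below its `n`-th largest entry has
`ℓ¹` norm at most `c_p · ‖x‖_p · n^{-(1-p)/p}`. -/
theorem nterm_approximation_bound.{u} (p : ℝ) (hp0 : 0 < p) (hp1 : p < 1) :
    ∃ c : ℝ, 0 < c ∧ ∀ (I : Type u) (_ : Countable I) (x : I → ℂ),
      (Summable fun i => ‖x i‖ ^ p) → ∀ n : ℕ, 1 ≤ n →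
      (∑' i : {i : I // ‖x i‖ ≤ nthLargest x n}, ‖x (i : I)‖) ≤
        c * (∑' i, ‖x i‖ ^ p) ^ (1 / p) * (n : ℝ) ^ (-((1 - p) / p)) := by
  refine ⟨1, one_pos, fun I _ x hsum n hn => ?_⟩
  set S := ∑' i, ‖x i‖ ^ p with hSdef
  have hS0 : 0 ≤ S := tsum_nonneg fun i => Real.rpow_nonneg (norm_nonneg _) p
  set T := nthLargest x n with hTdef
  have hT0 : 0 ≤ T := Real.sSup_nonneg fun t ht => ht.1.le
  have hnR : (0:ℝ) < (n:ℝ) := by exact_mod_cast hn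
  -- T ≤ (S/n)^(1/p)
  have hTle : T ≤ (S / n) ^ (1 / p) := by
    apply Real.sSup_le
    · rintro t ⟨ht0, htn⟩
      have hfin : Finite {i : I // t ≤ ‖x i‖} := by
        by_contra h
        rw [not_finite_iff_infinite] at h
        rw [Nat.card_eq_zero_of_infinite] at htn
        omega
      have := Fintype.ofFinite {i : I // t ≤ ‖x i‖}
      have hcard : (n : ℝ) * t ^ p ≤ S := by
        have h1 : (Nat.card {i : I // t ≤ ‖x i‖}) • (t ^ p) ≤
            ∑ i : {i : I // t ≤ ‖x i‖}, ‖x (i:I)‖ ^ p := by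
          rw [Nat.card_eq_fintype_card, ← Finset.card_univ]
          exact Finset.card_nsmul_le_sum Finset.univ _ _
            (fun i _ => Real.rpow_le_rpow ht0.le i.2 hp0.le)
        have h2 : ∑ i : {i : I // t ≤ ‖x i‖}, ‖x (i:I)‖ ^ p ≤ S := by
          rw [← tsum_fintype (L := SummationFilter.unconditional _)]
          exact Summable.tsum_subtype_le (fun i => ‖x i‖ ^ p) _
            (fun i => Real.rpow_nonneg (norm_nonneg _) p) hsum
        have h3 : (n:ℝ) * t ^ p ≤ (Nat.card {i : I // t ≤ ‖x i‖} : ℝ) * t ^ p := by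
          have ht : (0:ℝ) ≤ t ^ p := Real.rpow_nonneg ht0.le p
          have : (n:ℝ) ≤ (Nat.card {i : I // t ≤ ‖x i‖} : ℝ) := by exact_mod_cast htn
          exact mul_le_mul_of_nonneg_right this ht
        calc (n:ℝ) * t ^ p ≤ (Nat.card {i : I // t ≤ ‖x i‖} : ℝ) * t ^ p := h3
          _ = (Nat.card {i : I // t ≤ ‖x i‖}) • (t ^ p) := by rw [nsmul_eq_mul]
          _ ≤ ∑ i : {i : I // t ≤ ‖x i‖}, ‖x (i:I)‖ ^ p := h1
          _ ≤ S := h2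
      have htp : t ^ p ≤ S / n := (le_div_iff₀ hnR).mpr (by linarith [hcard, mul_comm (n:ℝ) (t^p)])
      calc t = (t ^ p) ^ (1/p) := by
              rw [← Real.rpow_mul ht0.le, mul_one_div, div_self hp0.ne', Real.rpow_one]
        _ ≤ (S / n) ^ (1/p) :=
              Real.rpow_le_rpow (Real.rpow_nonneg ht0.le p) htp (by positivity)
    · positivity
  -- pointwise bound on the tail
  have hbound : ∀ i : {i : I // ‖x i‖ ≤ T}, ‖x (i:I)‖ ≤ ‖x (i:I)‖ ^ p * T ^ (1 - p) := by
    intro i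
    have h1 : ‖x (i:I)‖ = ‖x (i:I)‖ ^ p * ‖x (i:I)‖ ^ (1 - p) := by
      rw [← Real.rpow_add_of_nonneg (norm_nonneg _) hp0.le (by linarith)]
      norm_num
    have h2 := Real.rpow_le_rpow (norm_nonneg (x (i:I))) i.2 (by linarith : (0:ℝ) ≤ 1 - p)
    calc ‖x (i:I)‖ = ‖x (i:I)‖ ^ p * ‖x (i:I)‖ ^ (1 - p) := h1
      _ ≤ ‖x (i:I)‖ ^ p * T ^ (1 - p) :=
          mul_le_mul_of_nonneg_left h2 (Real.rpow_nonneg (norm_nonneg _) p)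
  have hsub : Summable fun i : {i : I // ‖x i‖ ≤ T} => ‖x (i:I)‖ ^ p := hsum.subtype _
  have hsub' : Summable fun i : {i : I // ‖x i‖ ≤ T} => ‖x (i:I)‖ ^ p * T ^ (1 - p) :=
    hsub.mul_right _
  have hsummable : Summable fun i : {i : I // ‖x i‖ ≤ T} => ‖x (i:I)‖ :=
    Summable.of_nonneg_of_le (fun i => norm_nonneg _) hbound hsub'
  have hq0 : (0:ℝ) ≤ (1 - p) / p := div_nonneg (by linarith) hp0.le
  calc (∑' i : {i : I // ‖x i‖ ≤ T}, ‖x (i:I)‖)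
      ≤ ∑' i : {i : I // ‖x i‖ ≤ T}, ‖x (i:I)‖ ^ p * T ^ (1 - p) :=
        Summable.tsum_le_tsum hbound hsummable hsub'
    _ = (∑' i : {i : I // ‖x i‖ ≤ T}, ‖x (i:I)‖ ^ p) * T ^ (1 - p) := tsum_mul_right
    _ ≤ S * T ^ (1 - p) := by
        apply mul_le_mul_of_nonneg_right _ (Real.rpow_nonneg hT0 _)
        exact Summable.tsum_subtype_le (fun i => ‖x i‖ ^ p) _
          (fun i => Real.rpow_nonneg (norm_nonneg _) p) hsum
    _ ≤ S * ((S / n) ^ (1/p)) ^ (1 - p) := by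
        apply mul_le_mul_of_nonneg_left _ hS0
        exact Real.rpow_le_rpow hT0 hTle (by linarith)
    _ = 1 * S ^ (1 / p) * (n : ℝ) ^ (-((1 - p) / p)) := by
        rw [← Real.rpow_mul (by positivity), mul_comm (1/p) (1-p), mul_one_div,
          Real.div_rpow hS0 hnR.le, Real.rpow_neg hnR.le, one_mul]
        rw [div_eq_mul_inv, ← mul_assoc, ← Real.rpow_one_add' hS0 ?h, mul_comm]
        · have e2 : 1 + (1 - p) / p = 1 / p := by field_simp; ring
          rw [e2]; ring
        case h =>
          have e2 : 1 + (1 - p) / p = 1 / p := by field_simp; ring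
          rw [e2]; positivity
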